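/- Let p be a prime and n ≥ 1 an integer with p dividing n+1. Then in sl_{n+1}(ZMod p): (i) the identity matrix 1 has trace zero, hence lies in sl_{n+1}(ZMod p); (ii) the element z := Σ_{i=1}^{n} i·(E_{i,i} − E_{i+1,i+1}) equals the identity matrix; and (iii) the centre of the Lie algebra sl_{n+1}(ZMod p) is exactly the one-dimensional (ZMod p)-span of the identity matrix. -/

import Mathlib

/-- for a prime `p` dividing `n+1`, in `sl_{n+1}(𝔽_p)`:
(i) the identity matrix has trace zero; (ii) `z = Σ_{i=1}^n i·(E_{i,i} − E_{i+1,i+1})`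
equals the identity matrix; (iii) the centre of `sl_{n+1}(𝔽_p)` is exactly the
one-dimensional span of the identity matrix. -/
theorem stmt14 (p n : ℕ) [Fact p.Prime] (hn : 1 ≤ n) (hpn : p ∣ (n + 1)) :
    -- (i) the identity matrix lies in `sl_{n+1}(ZMod p)`
    Matrix.trace (1 : Matrix (Fin (n + 1)) (Fin (n + 1)) (ZMod p)) = 0 ∧
    -- (ii) `z = Σ_{i=1}^n i·(E_{i,i} − E_{i+1,i+1})` equals the identity matrix
    (∑ i : Fin n, (((i : ℕ) + 1 : ℕ) : ZMod p) •
        (Matrix.single (Fin.castSucc i) (Fin.castSucc i) (1 : ZMod p) -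
          Matrix.single (Fin.succ i) (Fin.succ i) (1 : ZMod p)) =
      (1 : Matrix (Fin (n + 1)) (Fin (n + 1)) (ZMod p))) ∧
    -- (iii) the centre of `sl_{n+1}(ZMod p)` is the span of the identity matrix,
    -- which is one-dimensional
    (1 : Matrix (Fin (n + 1)) (Fin (n + 1)) (ZMod p)) ≠ 0 ∧
    (∀ x : Matrix (Fin (n + 1)) (Fin (n + 1)) (ZMod p), Matrix.trace x = 0 →
      ((∀ y : Matrix (Fin (n + 1)) (Fin (n + 1)) (ZMod p),
          Matrix.trace y = 0 → x * y - y * x = 0) ↔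
        x ∈ Submodule.span (ZMod p)
          {(1 : Matrix (Fin (n + 1)) (Fin (n + 1)) (ZMod p))})) := by
  have hcast : ((n + 1 : ℕ) : ZMod p) = 0 := (ZMod.natCast_eq_zero_iff _ _).mpr hpn
  have hall : (∑ k : Fin (n+1), Matrix.single k k (1 : ZMod p)) = 1 := by
    ext a b
    by_cases hab : a = b
    · subst hab
      simp [Matrix.sum_apply, Matrix.single, Matrix.one_apply]
    · have hemp : Finset.filter (fun x : Fin (n+1) => x = a ∧ x = b) Finset.univ = ∅ := by
        ext k
        simp only [Finset.mem_filter, Finset.mem_univ, true_and, Finset.notMem_empty,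
          iff_false]
        rintro ⟨rfl, rfl⟩
        exact hab rfl
      simp [Matrix.sum_apply, Matrix.single, Matrix.one_apply, hab, hemp]
  refine ⟨?_, ?_, ?_, ?_⟩
  · rw [Matrix.trace_one]
    simpa using hcast
  · have h1 : ∑ i : Fin n, (((i : ℕ) + 1 : ℕ) : ZMod p) •
        Matrix.single (Fin.castSucc i) (Fin.castSucc i) (1 : ZMod p)
        = ∑ k : Fin (n+1), (((k : ℕ) + 1 : ℕ) : ZMod p) •
            Matrix.single k k (1 : ZMod p) := by
      rw [Fin.sum_univ_castSucc]
      simp [hcast]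
    have h2 : ∑ i : Fin n, (((i : ℕ) + 1 : ℕ) : ZMod p) •
        Matrix.single (Fin.succ i) (Fin.succ i) (1 : ZMod p)
        = ∑ k : Fin (n+1), (((k : ℕ)) : ZMod p) •
            Matrix.single k k (1 : ZMod p) := by
      rw [Fin.sum_univ_succ]
      simp
    have hcoef : ∀ k : Fin (n+1), ((((k : ℕ) + 1 : ℕ)) : ZMod p) - (((k : ℕ)) : ZMod p)
        = (1 : ZMod p) := by
      intro k; push_cast; ring
    calc ∑ i : Fin n, (((i : ℕ) + 1 : ℕ) : ZMod p) •
        (Matrix.single (Fin.castSucc i) (Fin.castSucc i) (1 : ZMod p) -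
          Matrix.single (Fin.succ i) (Fin.succ i) (1 : ZMod p))
        = ∑ k : Fin (n+1), (((((k : ℕ) + 1 : ℕ)) : ZMod p) - (((k : ℕ)) : ZMod p)) •
            Matrix.single k k (1 : ZMod p) := by
          simp only [smul_sub, Finset.sum_sub_distrib, h1, h2, sub_smul]
      _ = 1 := by
          simp only [hcoef, one_smul, hall]
  · intro h
    have h0 := congrFun (congrFun h 0) 0
    simp [Matrix.one_apply] at h0
  · intro x hx
    constructor
    · intro hcomm
      have key : ∀ i j : Fin (n+1), i ≠ j →
          x * Matrix.single i j (1 : ZMod p)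
            = Matrix.single i j (1 : ZMod p) * x := by
        intro i j hij
        exact sub_eq_zero.mp (hcomm _ (Matrix.trace_single_eq_of_ne i j 1 hij))
      have hoff : ∀ i j : Fin (n+1), i ≠ j → x j i = 0 := by
        intro i j hij
        have h := congrFun (congrFun (key i j hij) j) j
        rw [Matrix.mul_single_apply_same,
          Matrix.single_mul_apply_of_ne _ _ _ _ _ (Ne.symm hij)] at h
        simpa using h
      have hdiag : ∀ i j : Fin (n+1), i ≠ j → x i i = x j j := by
        intro i j hij
        have h := congrFun (congrFun (key i j hij) i) j
        rw [Matrix.mul_single_apply_same,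
          Matrix.single_mul_apply_same] at h
        simpa using h
      refine Submodule.mem_span_singleton.mpr ⟨x 0 0, ?_⟩
      ext a b
      by_cases hab : a = b
      · subst hab
        by_cases ha : a = 0
        · subst ha; simp [Matrix.one_apply]
        · simp [Matrix.one_apply, (hdiag a 0 ha).symm]
      · simp [Matrix.one_apply_ne hab, hoff b a (Ne.symm hab)]
    · intro hx' y hy
      obtain ⟨c, rfl⟩ := Submodule.mem_span_singleton.mp hx'
      simp [Matrix.smul_mul, Matrix.mul_smul]
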